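/- If R has property (A) and W ⊆ R is a multiplicative set of regular elements, then W⁻¹R has property (A). -/

import Mathlib

/-- The Ohm-Rush content of `f ∈ S`: the intersection of all ideals `I` of `R`
with `f ∈ IS`. -/
def orContent (R : Type*) [CommRing R] {S : Type*} [CommRing S] [Algebra R S] (f : S) :
    Ideal R :=
  sInf {I : Ideal R | f ∈ I.map (algebraMap R S)}

/-- `S` is an Ohm-Rush `R`-algebra if each `f ∈ S` lies in `c(f)S`,
i.e. there is a minimal ideal `I` with `f ∈ IS`. -/
def IsOhmRush (R S : Type*) [CommRing R] [CommRing S] [Algebra R S] : Prop :=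
  ∀ f : S, f ∈ (orContent R f).map (algebraMap R S)

/-- `S` is a McCoy `R`-algebra if whenever `f * g = 0` with `g ≠ 0`,
some nonzero `r ∈ R` annihilates the content of `f`. -/
def IsMcCoy (R S : Type*) [CommRing R] [CommRing S] [Algebra R S] : Prop :=
  ∀ f g : S, f * g = 0 → g ≠ 0 → ∃ r : R, r ≠ 0 ∧ ∀ a ∈ orContent R f, r * a = 0

/-- `S` is a weak content `R`-algebra: Ohm-Rush and `rad c(fg) = rad (c(f)c(g))`. -/
def IsWeakContent (R S : Type*) [CommRing R] [CommRing S] [Algebra R S] : Prop :=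
  IsOhmRush R S ∧ ∀ f g : S,
    (orContent R (f * g)).radical = (orContent R f * orContent R g).radical

/-- Property (A): every finitely generated ideal consisting of zero-divisors
has a nonzero annihilator. -/
def HasPropertyA (R : Type*) [CommRing R] : Prop :=
  ∀ J : Ideal R, J.FG → (∀ a ∈ J, a ∉ nonZeroDivisors R) →
    ∃ r : R, r ≠ 0 ∧ ∀ a ∈ J, a * r = 0

/-- Fidel (A): every quotient has property (A). -/
def HasFidelA (R : Type*) [CommRing R] : Prop :=
  ∀ I : Ideal R, HasPropertyA (R ⧸ I)

/-- `S` is a semicontent `R`-algebra: faithfully flat, Ohm-Rush, and for every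
multiplicative set `W ⊆ R` meeting `c(f)`, `c(fg)` and `c(g)` agree after
localizing at `W`. -/
def IsSemicontent (R S : Type*) [CommRing R] [CommRing S] [Algebra R S] : Prop :=
  Module.FaithfullyFlat R S ∧ IsOhmRush R S ∧
    ∀ (W : Submonoid R) (f g : S), (∃ w ∈ W, w ∈ orContent R f) →
      (orContent R (f * g)).map (algebraMap R (Localization W)) =
        (orContent R g).map (algebraMap R (Localization W))

section
variable (R : Type*) [CommRing R] (W : Submonoid R) (hW : W ≤ nonZeroDivisors R)

lemma aux_inj (hW : W ≤ nonZeroDivisors R) :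
    Function.Injective (algebraMap R (Localization W)) :=
  IsLocalization.injective _ hW

lemma aux_zd (hW : W ≤ nonZeroDivisors R) (a : R)
    (h : algebraMap R (Localization W) a ∉ nonZeroDivisors (Localization W)) :
    a ∉ nonZeroDivisors R := by
  intro ha
  apply h
  rw [mem_nonZeroDivisors_iff_right]
  intro x hx
  obtain ⟨⟨s, w⟩, hs⟩ := IsLocalization.surj W x
  have h1 : algebraMap R (Localization W) (a * s) = 0 := by
    rw [map_mul, ← hs, ← mul_assoc, mul_comm _ x, hx, zero_mul]
  have h2 : a * s = 0 := aux_inj R W hW (by simpa using h1)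
  have hs0 : s = 0 := ha.2 s (by rwa [mul_comm] at h2)
  have : x * algebraMap R (Localization W) w = 0 := by rw [hs, hs0, map_zero]
  exact ((IsLocalization.map_units (Localization W) w).mul_left_eq_zero).mp this
end

/-- If `R` has property (A) and `W ⊆ R` is a multiplicative set of regular
elements, then `W⁻¹R` has property (A). -/
theorem stmt_11 (R : Type*) [CommRing R]
    (hA : HasPropertyA R) (W : Submonoid R) (hW : W ≤ nonZeroDivisors R) :
    HasPropertyA (Localization W) := by
  intro J hFG hZD
  obtain ⟨s, hs⟩ := hFG
  set φ := algebraMap R (Localization W) with hφ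
  -- choose numerators
  choose p hp using fun x : Localization W => IsLocalization.surj W x
  classical
  let T : Finset R := s.image (fun x => (p x).1)
  have hTJ : ∀ a ∈ Ideal.span (T : Set R), a ∉ nonZeroDivisors R := by
    intro a haJ
    apply aux_zd R W hW
    intro hreg
    have hmem : φ a ∈ J := by
      rw [← hs]
      have : φ a ∈ (Ideal.span (T : Set R)).map φ := Ideal.mem_map_of_mem φ haJ
      rw [Ideal.map_span] at this
      refine Ideal.span_le.mpr ?_ this
      rintro y ⟨t, ht, rfl⟩
      simp only [T, Finset.coe_image, Set.mem_image, Finset.mem_coe] at ht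
      obtain ⟨x, hx, rfl⟩ := ht
      have hxJ : x ∈ J := by rw [← hs]; exact Ideal.subset_span hx
      rw [← hp x]
      exact Ideal.mul_mem_right _ _ (hs ▸ Ideal.subset_span hx)
    exact hZD (φ a) hmem hreg
  obtain ⟨r, hr0, hr⟩ := hA (Ideal.span (T : Set R)) ⟨T, rfl⟩ hTJ
  refine ⟨φ r, ?_, ?_⟩
  · intro h; exact hr0 (aux_inj R W hW (by simpa using h))
  · intro a haJ
    rw [← hs] at haJ
    induction haJ using Submodule.span_induction with
    | mem x hx =>
      have hnum : (p x).1 * r = 0 := hr _ (Ideal.subset_span (Finset.mem_image_of_mem _ hx))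
      have : x * φ r * φ (p x).2 = 0 := by
        rw [mul_right_comm, hp x, ← map_mul, hnum, map_zero]
      exact ((IsLocalization.map_units (Localization W) (p x).2).mul_left_eq_zero).mp this
    | zero => simp
    | add x y _ _ hx hy => rw [add_mul, hx, hy, add_zero]
    | smul c x _ hx => rw [smul_eq_mul, mul_assoc, hx, mul_zero]
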